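/- Let ν be a Radon measure on [0,1] with ν(I) ≤ |I|^α for all dyadic intervals I, and let ν_n = Σ_{j=1}^{N} ν(I_{j,n}) δ_{j/N} with N = 2^n and I_{j,n} = [(j−1)/N, j/N) (with the last interval closed). Then for any subinterval I of [0,1]: if |I| < 1/N then ν_n(I) ≤ 1/N^α, and if |I| ≥ 1/N then ν_n(I) ≤ 3|I|^α. -/

import Mathlib

open MeasureTheory

/-- The dyadic interval of generation `n` and index `j` (`1 ≤ j ≤ 2^n`):
`[(j-1)/2^n, j/2^n)` for `j < 2^n`, and `[(2^n-1)/2^n, 1]` for `j = 2^n`. -/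
def dyadicInterval (n j : ℕ) : Set ℝ :=
  if j = 2 ^ n then Set.Icc ((2 ^ n - 1 : ℝ) / 2 ^ n) 1
  else Set.Ico ((j - 1 : ℝ) / 2 ^ n) ((j : ℝ) / 2 ^ n)

/-- The `n`-step discrete approximation `ν_n = ∑_{j=1}^{2^n} ν(I_{j,n}) δ_{j/2^n}`. -/
noncomputable def stepApprox (ν : Measure ℝ) (n : ℕ) : Measure ℝ :=
  Measure.sum (fun j : Fin (2 ^ n) =>
    ν (dyadicInterval n (j + 1)) • Measure.dirac (((j : ℕ) + 1 : ℝ) / 2 ^ n))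

lemma dyadic_measurable (n j : ℕ) : MeasurableSet (dyadicInterval n j) := by
  unfold dyadicInterval; split_ifs
  · exact measurableSet_Icc
  · exact measurableSet_Ico

lemma dyadic_lower {n j : ℕ} {x : ℝ} (hx : x ∈ dyadicInterval n j) :
    ((j : ℝ) - 1) / 2 ^ n ≤ x := by
  unfold dyadicInterval at hx
  split_ifs at hx with h
  · subst h; rw [show (((2:ℕ) ^ n : ℕ) : ℝ) = (2:ℝ)^n by push_cast; ring]; exact hx.1
  · exact hx.1

lemma dyadic_upper {n j : ℕ} {x : ℝ} (hj2 : j ≤ 2 ^ n) (hx : x ∈ dyadicInterval n j) :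
    x ≤ (j : ℝ) / 2 ^ n := by
  unfold dyadicInterval at hx
  split_ifs at hx with h
  · subst h
    have : ((2 ^ n : ℕ) : ℝ) / 2 ^ n = 1 := by
      push_cast; field_simp
    rw [this]; exact hx.2
  · exact le_of_lt hx.2

lemma dyadic_upper_lt {n j : ℕ} {x : ℝ} (hj2 : j < 2 ^ n) (hx : x ∈ dyadicInterval n j) :
    x < (j : ℝ) / 2 ^ n := by
  unfold dyadicInterval at hx
  rw [if_neg (Nat.ne_of_lt hj2)] at hx
  exact hx.2

lemma dyadic_disjoint {n j j' : ℕ} (hlt : j < j') (hj' : j' ≤ 2 ^ n) :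
    Disjoint (dyadicInterval n j) (dyadicInterval n j') := by
  rw [Set.disjoint_left]
  intro x hx hx'
  have h1 : x < (j : ℝ) / 2 ^ n := dyadic_upper_lt (lt_of_lt_of_le hlt hj') hx
  have h2 : ((j' : ℝ) - 1) / 2 ^ n ≤ x := dyadic_lower hx'
  have h3 : (j : ℝ) ≤ (j' : ℝ) - 1 := by
    have : (j : ℝ) + 1 ≤ (j' : ℝ) := by exact_mod_cast hlt
    linarith
  have h4 : (j : ℝ) / 2 ^ n ≤ ((j' : ℝ) - 1) / 2 ^ n := by
    apply div_le_div_of_nonneg_right h3 <;> positivity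
  linarith

lemma dyadic_subset_tile {n m j : ℕ} (hm : m ≤ n) (hj1 : 1 ≤ j) (hj2 : j ≤ 2 ^ n) :
    dyadicInterval n j ⊆ dyadicInterval m ((j - 1) / 2 ^ (n - m) + 1) := by
  set K := 2 ^ (n - m) with hK
  have hKpos : 0 < K := Nat.pow_pos (by norm_num)
  have hNK : 2 ^ n = 2 ^ m * K := by rw [hK, ← pow_add]; congr 1; omega
  set t := (j - 1) / K + 1 with ht
  have htK_le : (t - 1) * K ≤ j - 1 := by
    simpa [ht] using Nat.div_mul_le_self (j - 1) K
  have hj_le_tK : j ≤ t * K := by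
    have h2 : j - 1 < t * K := by
      rw [ht]; exact (Nat.div_lt_iff_lt_mul hKpos).mp (Nat.lt_succ_self _)
    omega
  have ht2 : t ≤ 2 ^ m := by
    have h1 : j - 1 < 2 ^ n := by
      have := Nat.one_le_two_pow (n := n); omega
    rw [hNK] at h1
    have h2 : (j - 1) / K < 2 ^ m := (Nat.div_lt_iff_lt_mul hKpos).mpr h1
    omega
  have h2n : (0:ℝ) < 2 ^ n := by positivity
  have h2m : (0:ℝ) < 2 ^ m := by positivity
  have hcast : ((2:ℝ) ^ n) = 2 ^ m * (K : ℝ) := by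
    rw [hK]; push_cast; rw [← pow_add]; congr 1; omega
  have hlow : ((t : ℝ) - 1) / 2 ^ m ≤ ((j : ℝ) - 1) / 2 ^ n := by
    rw [div_le_div_iff₀ h2m h2n, hcast]
    have h1 : ((t - 1 : ℕ) : ℝ) * K ≤ ((j - 1 : ℕ) : ℝ) := by exact_mod_cast htK_le
    have h2 : ((t - 1 : ℕ) : ℝ) = (t : ℝ) - 1 := by
      have h3 : 1 ≤ t := ht ▸ Nat.le_add_left 1 _
      push_cast [Nat.cast_sub h3]; ring
    have h3 : ((j - 1 : ℕ) : ℝ) = (j : ℝ) - 1 := by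
      push_cast [Nat.cast_sub hj1]; ring
    rw [h2, h3] at h1
    nlinarith [h2m.le]
  have hup : (j : ℝ) / 2 ^ n ≤ (t : ℝ) / 2 ^ m := by
    rw [div_le_div_iff₀ h2n h2m, hcast]
    have h1 : (j : ℝ) ≤ (t : ℝ) * K := by exact_mod_cast hj_le_tK
    nlinarith [h2m.le]
  intro x hx
  have hxlow : ((j : ℝ) - 1) / 2 ^ n ≤ x := dyadic_lower hx
  unfold dyadicInterval
  split_ifs with h
  · constructor
    · have heq : ((2:ℝ) ^ m - 1) / 2 ^ m = ((t : ℝ) - 1) / 2 ^ m := by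
        rw [h]; push_cast; ring_nf
      rw [heq]; exact le_trans hlow hxlow
    · have h5 := dyadic_upper hj2 hx
      have hj2n : (j : ℝ) / 2 ^ n ≤ 1 := by
        rw [div_le_one h2n]; exact_mod_cast hj2
      linarith
  · have htlt : t < 2 ^ m := lt_of_le_of_ne ht2 h
    constructor
    · exact le_trans hlow hxlow
    · by_cases hjn : j = 2 ^ n
      · exfalso
        apply h
        have hA : K ≤ 2 ^ m * K := Nat.le_mul_of_pos_left K (Nat.pow_pos (by norm_num))
        have hsub : (2 ^ m - 1) * K = 2 ^ m * K - K := by rw [Nat.sub_mul, one_mul]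
        have hdecomp : 2 ^ m * K - 1 = (K - 1) + (2 ^ m - 1) * K := by omega
        have hj1' : j - 1 = 2 ^ m * K - 1 := by omega
        rw [ht, hj1', hdecomp, Nat.add_mul_div_right _ _ hKpos,
          Nat.div_eq_of_lt (by omega)]
        have h1m : 1 ≤ 2 ^ m := Nat.one_le_two_pow
        omega
      · have hjlt : j < 2 ^ n := lt_of_le_of_ne hj2 hjn
        exact lt_of_lt_of_le (dyadic_upper_lt hjlt hx) hup

lemma dyadic_tile_le {n m j : ℕ} (hm : m ≤ n) (hj1 : 1 ≤ j) (hj2 : j ≤ 2 ^ n) :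
    (j - 1) / 2 ^ (n - m) + 1 ≤ 2 ^ m := by
  have hKpos : 0 < 2 ^ (n - m) := Nat.pow_pos (by norm_num)
  have hNK : 2 ^ n = 2 ^ m * 2 ^ (n - m) := by rw [← pow_add]; congr 1; omega
  have h1 : j - 1 < 2 ^ n := by
    have := Nat.one_le_two_pow (n := n); omega
  rw [hNK] at h1
  have h2 := (Nat.div_lt_iff_lt_mul hKpos).mpr h1
  omega

open scoped Classical in
lemma stepApprox_apply (ν : Measure ℝ) (n : ℕ) {I : Set ℝ} (hI : MeasurableSet I) :
    stepApprox ν n I =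
      ∑ j ∈ Finset.univ.filter (fun j : Fin (2 ^ n) => ((j : ℕ) + 1 : ℝ) / 2 ^ n ∈ I),
        ν (dyadicInterval n ((j : ℕ) + 1)) := by
  rw [stepApprox, Measure.sum_apply _ hI, tsum_fintype, Finset.sum_filter]
  apply Finset.sum_congr rfl
  intro j _
  rw [Measure.smul_apply, Measure.dirac_apply' _ hI, smul_eq_mul, Set.indicator_apply]
  by_cases h : ((j : ℕ) + 1 : ℝ) / 2 ^ n ∈ I <;> simp [h]

lemma grid_dist {n : ℕ} {a b : ℕ} (hab : a ≤ b) :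
    dist (((a : ℕ) + 1 : ℝ) / 2 ^ n) (((b : ℕ) + 1 : ℝ) / 2 ^ n)
      = ((b : ℝ) - a) / 2 ^ n := by
  have h2n : (0:ℝ) < 2 ^ n := by positivity
  have hab' : (a:ℝ) ≤ b := by exact_mod_cast hab
  rw [Real.dist_eq, div_sub_div_same, abs_div, abs_of_pos h2n]
  congr 1
  rw [abs_of_nonpos (by linarith)]
  ring

/-- If `ν(I) ≤ |I|^α` on every dyadic interval, then for its `n`-step approximation
`ν_n` and any interval `I ⊆ [0,1]`: `ν_n(I) ≤ 1/N^α` when `|I| < 1/N`, and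
`ν_n(I) ≤ 3·|I|^α` when `|I| ≥ 1/N` (where `N = 2^n`). -/
theorem stepApprox_frostman (ν : Measure ℝ) [IsFiniteMeasure ν]
    (α : ℝ) (hα : 0 < α) (hα1 : α ≤ 1)
    (hdy : ∀ n j : ℕ, 1 ≤ j → j ≤ 2 ^ n →
      ν (dyadicInterval n j) ≤ ENNReal.ofReal ((1 / 2 ^ n : ℝ) ^ α))
    (n : ℕ) (I : Set ℝ) (hI : I ⊆ Set.Icc (0 : ℝ) 1) (hconn : I.OrdConnected) :
    (Metric.diam I < 1 / 2 ^ n →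
        stepApprox ν n I ≤ ENNReal.ofReal ((1 / 2 ^ n : ℝ) ^ α)) ∧
      ((1 : ℝ) / 2 ^ n ≤ Metric.diam I →
        stepApprox ν n I ≤ ENNReal.ofReal (3 * Metric.diam I ^ α)) := by
  classical
  have hIm : MeasurableSet I := hconn.measurableSet
  have hIb : Bornology.IsBounded I := (Metric.isBounded_Icc (0:ℝ) 1).subset hI
  have h2n : (0:ℝ) < 2 ^ n := by positivity
  set S := Finset.univ.filter (fun j : Fin (2 ^ n) => ((j : ℕ) + 1 : ℝ) / 2 ^ n ∈ I)
    with hS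
  have happly : stepApprox ν n I = ∑ j ∈ S, ν (dyadicInterval n ((j : ℕ) + 1)) :=
    stepApprox_apply ν n hIm
  have hmemS : ∀ j ∈ S, ((j : ℕ) + 1 : ℝ) / 2 ^ n ∈ I := by
    intro j hj
    exact (Finset.mem_filter.mp hj).2
  constructor
  · -- Part 1
    intro hd
    rw [happly]
    rcases S.eq_empty_or_nonempty with hSe | hSne
    · rw [hSe]; simp
    · obtain ⟨j0, hj0⟩ := hSne
      have huniq : ∀ j ∈ S, j = j0 := by
        intro j hj
        by_contra hne
        have h1 : dist (((j : ℕ) + 1 : ℝ) / 2 ^ n) (((j0 : ℕ) + 1 : ℝ) / 2 ^ n)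
            ≤ Metric.diam I := Metric.dist_le_diam_of_mem hIb (hmemS j hj) (hmemS j0 hj0)
        have hvne : (j : ℕ) ≠ (j0 : ℕ) := fun h => hne (Fin.ext h)
        rcases Ne.lt_or_gt hvne with hlt | hlt
        · rw [grid_dist (le_of_lt hlt)] at h1
          have : (1:ℝ) ≤ (j0 : ℝ) - j := by
            have : (j:ℕ) + 1 ≤ (j0:ℕ) := hlt
            have := (Nat.cast_le (α := ℝ)).mpr this
            push_cast at this ⊢; linarith
          have : (1:ℝ) / 2 ^ n ≤ ((j0:ℝ) - j) / 2 ^ n := by gcongr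
          linarith
        · rw [dist_comm, grid_dist (le_of_lt hlt)] at h1
          have : (1:ℝ) ≤ (j : ℝ) - j0 := by
            have : (j0:ℕ) + 1 ≤ (j:ℕ) := hlt
            have := (Nat.cast_le (α := ℝ)).mpr this
            push_cast at this ⊢; linarith
          have : (1:ℝ) / 2 ^ n ≤ ((j:ℝ) - j0) / 2 ^ n := by gcongr
          linarith
      have hSeq : S = {j0} := by
        apply Finset.eq_singleton_iff_unique_mem.mpr ⟨hj0, huniq⟩
      rw [hSeq, Finset.sum_singleton]
      exact hdy n ((j0 : ℕ) + 1) (by omega) (by have := j0.isLt; omega)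
  · -- Part 2
    intro hd
    rw [happly]
    rcases S.eq_empty_or_nonempty with hSe | hSne
    · rw [hSe]; simp
    · set d := Metric.diam I with hdd
      have hd0 : (0:ℝ) < d := lt_of_lt_of_le (by positivity) hd
      have hd1 : d ≤ 1 := by
        have h1 := Metric.diam_mono hI (Metric.isBounded_Icc (0:ℝ) 1)
        rwa [Real.diam_Icc (by norm_num), show (1:ℝ) - 0 = 1 by ring] at h1
      have hNd1 : (1:ℝ) ≤ 2 ^ n * d := by
        rw [div_le_iff₀ h2n] at hd; linarith
      set q := ⌊(2 ^ n : ℝ) * d⌋₊ with hq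
      have hq1 : 1 ≤ q := Nat.le_floor (by exact_mod_cast hNd1)
      have hqle : (q : ℝ) ≤ 2 ^ n * d := Nat.floor_le (by positivity)
      have hqN : q ≤ 2 ^ n := by
        have h1 : (q:ℝ) ≤ 2 ^ n := le_trans hqle (by nlinarith)
        exact_mod_cast h1
      set i := Nat.log 2 q with hi
      set K := 2 ^ i with hK
      have hKq : K ≤ q := Nat.pow_log_le_self 2 (by omega)
      have hq2K : q < 2 * K := by
        have h5 := Nat.lt_pow_succ_log_self (b := 2) (by norm_num) q
        rw [← hi, pow_succ, ← hK] at h5; omega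
      have hKpos : 0 < K := Nat.pow_pos (by norm_num)
      have hin : i ≤ n := by
        have h1 : (2:ℕ) ^ i ≤ 2 ^ n := le_trans hKq hqN
        exact (Nat.pow_le_pow_iff_right (by norm_num)).mp h1
      set m := n - i with hm
      have hmn : m ≤ n := Nat.sub_le n i
      have hnm : n - m = i := by omega
      have hNK : (2:ℕ) ^ n = 2 ^ m * K := by rw [hK, ← pow_add]; congr 1; omega
      have hhd : (1 : ℝ) / 2 ^ m ≤ d := by
        have hcast : (2:ℝ) ^ n = 2 ^ m * (K:ℝ) := by exact_mod_cast hNK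
        have h2m : (0:ℝ) < 2 ^ m := by positivity
        rw [div_le_iff₀ h2m]
        have hKd : (K:ℝ) ≤ 2 ^ n * d := le_trans (by exact_mod_cast hKq) hqle
        rw [hcast] at hKd
        have : (1:ℝ) ≤ K := by exact_mod_cast hKpos
        nlinarith
      -- min and max of S
      set ja := S.min' hSne with hja
      set jb := S.max' hSne with hjb
      have hjab : ja ≤ jb := S.min'_le _ (S.max'_mem hSne)
      have hjabn : (ja : ℕ) ≤ (jb : ℕ) := hjab
      have hdist : ((jb : ℕ) : ℝ) - (ja : ℕ) ≤ 2 ^ n * d := by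
        have h1 := Metric.dist_le_diam_of_mem hIb
          (hmemS ja (S.min'_mem hSne)) (hmemS jb (S.max'_mem hSne))
        rw [grid_dist hjabn, div_le_iff₀ h2n] at h1
        nlinarith
      have hba : (jb : ℕ) - (ja : ℕ) ≤ q := by
        apply Nat.le_floor
        push_cast [Nat.cast_sub hjabn]
        exact hdist
      obtain ⟨ta, hta⟩ : ∃ x : ℕ, x = (ja : ℕ) / K + 1 := ⟨_, rfl⟩
      obtain ⟨tb, htb⟩ : ∃ x : ℕ, x = (jb : ℕ) / K + 1 := ⟨_, rfl⟩
      have hta1 : 1 ≤ ta := by rw [hta]; exact Nat.le_add_left 1 _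
      have htab : tb ≤ ta + 2 := by
        have h1 : (jb : ℕ) ≤ (ja : ℕ) + 2 * K := by omega
        have h2 : (jb : ℕ) / K ≤ ((ja : ℕ) + 2 * K) / K := Nat.div_le_div_right h1
        rw [Nat.add_mul_div_right _ _ hKpos] at h2
        calc tb = (jb : ℕ) / K + 1 := htb
          _ ≤ ((ja : ℕ) / K + 2) + 1 := Nat.add_le_add_right h2 1
          _ = ta + 2 := by rw [hta]
      have htb2m : tb ≤ 2 ^ m := by
        have h6 := dyadic_tile_le (n := n) (m := m) (j := (jb : ℕ) + 1) hmn (by omega)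
          (by have := jb.isLt; omega)
        rw [htb]
        simpa [hnm, ← hK, Nat.add_sub_cancel] using h6
      calc ∑ j ∈ S, ν (dyadicInterval n ((j : ℕ) + 1))
          = ν (⋃ j ∈ S, dyadicInterval n ((j : ℕ) + 1)) := by
            rw [measure_biUnion_finset _ (fun j _ => dyadic_measurable n _)]
            intro x hx y hy hne
            have hvne : (x : ℕ) + 1 ≠ (y : ℕ) + 1 := by
              intro h; exact hne (Fin.ext (by omega))
            rcases Ne.lt_or_gt hvne with hlt | hlt
            · exact dyadic_disjoint hlt (by have := y.isLt; omega)
            · exact (dyadic_disjoint hlt (by have := x.isLt; omega)).symm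
        _ ≤ ν (⋃ t ∈ Finset.Icc ta tb, dyadicInterval m t) := by
            apply measure_mono
            apply Set.iUnion₂_subset
            intro j hj
            have h1 : dyadicInterval n ((j:ℕ)+1) ⊆ dyadicInterval m ((j:ℕ)/K + 1) := by
              have := dyadic_subset_tile (n := n) (m := m) (j := (j:ℕ)+1) hmn (by omega)
                (by have := j.isLt; omega)
              simpa [hnm, ← hK, Nat.add_sub_cancel] using this
            refine h1.trans ?_
            apply Set.subset_biUnion_of_mem (u := fun t => dyadicInterval m t)
            show (j:ℕ)/K + 1 ∈ Finset.Icc ta tb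
            rw [Finset.mem_Icc, hta, htb]
            constructor
            · exact Nat.add_le_add_right (Nat.div_le_div_right (S.min'_le j hj)) 1
            · exact Nat.add_le_add_right (Nat.div_le_div_right (S.le_max' j hj)) 1
        _ ≤ ∑ t ∈ Finset.Icc ta tb, ν (dyadicInterval m t) := measure_biUnion_finset_le _ _
        _ ≤ ∑ _t ∈ Finset.Icc ta tb, ENNReal.ofReal ((1 / 2 ^ m : ℝ) ^ α) := by
            apply Finset.sum_le_sum
            intro t ht
            rw [Finset.mem_Icc] at ht
            exact hdy m t (le_trans hta1 ht.1) (le_trans ht.2 htb2m)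
        _ ≤ 3 * ENNReal.ofReal ((1 / 2 ^ m : ℝ) ^ α) := by
            rw [Finset.sum_const, Nat.card_Icc]
            have hcard : tb + 1 - ta ≤ 3 := by
              rw [Nat.sub_le_iff_le_add]
              calc tb + 1 ≤ (ta + 2) + 1 := Nat.add_le_add_right htab 1
                _ = 3 + ta := by ring
            calc (tb + 1 - ta) • ENNReal.ofReal ((1 / 2 ^ m : ℝ) ^ α)
                ≤ 3 • ENNReal.ofReal ((1 / 2 ^ m : ℝ) ^ α) := by
                  exact nsmul_le_nsmul_left zero_le hcard
              _ = 3 * ENNReal.ofReal ((1 / 2 ^ m : ℝ) ^ α) := by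
                  rw [nsmul_eq_mul]; norm_num
        _ ≤ ENNReal.ofReal (3 * d ^ α) := by
            rw [show (3 : ENNReal) = ENNReal.ofReal (3:ℝ) by norm_num,
              ← ENNReal.ofReal_mul (by norm_num)]
            apply ENNReal.ofReal_le_ofReal
            have h1 : (1 / 2 ^ m : ℝ) ^ α ≤ d ^ α :=
              Real.rpow_le_rpow (by positivity) hhd (le_of_lt hα)
            nlinarith [Real.rpow_nonneg (show (0:ℝ) ≤ 1 / 2 ^ m by positivity) α]
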